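/- (Fixed-time convergence of the signed-power scalar ODE.) Let α₁ > 0 and β₁ > 0 be real numbers, let p, q be positive integers with q < p, and let t₀ ∈ ℝ. Suppose e : [t₀, ∞) → ℝ is differentiable and satisfies e′(t) = −α₁·⌊e(t)⌉^{1+q/p} − β₁·⌊e(t)⌉^{1−q/p} for all t ≥ t₀. Then e(t) = 0 for all t ≥ t₀ + T*, where T* = π·p/(2·q·√(α₁·β₁)). The settling time bound T* is independent of the initial value e(t₀). -/

import Mathlib

/-- The signed power `⌊x⌉^a = |x|^a · sign(x)`. -/
noncomputable def spow (x a : ℝ) : ℝ := |x| ^ a * Real.sign x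

lemma mul_spow_nonneg (x a : ℝ) : 0 ≤ x * spow x a := by
  unfold spow
  rcases lt_trichotomy x 0 with h | h | h
  · rw [Real.sign_of_neg h]
    nlinarith [Real.rpow_nonneg (abs_nonneg x) a]
  · simp [h]
  · rw [Real.sign_of_pos h]
    nlinarith [Real.rpow_nonneg (abs_nonneg x) a]

lemma hasDerivAt_aux (α₁ β₁ : ℝ) (hα₁ : 0 < α₁) (hβ₁ : 0 < β₁) (r : ℝ) (e : ℝ → ℝ) (s : ℝ)
    (hd : HasDerivAt e (-α₁ * spow (e s) (1 + r) - β₁ * spow (e s) (1 - r)) s)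
    (hne : e s ≠ 0) :
    HasDerivAt (fun u => Real.arctan (Real.sqrt α₁ / Real.sqrt β₁ * ((e u) ^ 2) ^ (r / 2)))
      (-(r * Real.sqrt (α₁ * β₁))) s := by
  set k : ℝ := Real.sqrt α₁ / Real.sqrt β₁ with hkdef
  set S : ℝ := Real.sqrt (α₁ * β₁) with hSdef
  set D : ℝ := -α₁ * spow (e s) (1 + r) - β₁ * spow (e s) (1 - r) with hDdef
  have hA : 0 < |e s| := abs_pos.2 hne
  set A : ℝ := |e s| with hAdef
  have hx2 : (e s) ^ 2 ≠ 0 := pow_ne_zero 2 hne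
  have h1 : HasDerivAt (fun u => (e u) ^ 2) ((2 : ℕ) * e s ^ 1 * D) s := hd.pow 2
  have h2 : HasDerivAt (fun y : ℝ => y ^ (r / 2)) ((r / 2) * ((e s) ^ 2) ^ (r / 2 - 1))
      ((e s) ^ 2) := Real.hasDerivAt_rpow_const (Or.inl hx2)
  have h3 := h2.comp s h1
  have h4 := (Real.hasDerivAt_arctan (k * ((e s) ^ 2) ^ (r / 2))).comp s (h3.const_mul k)
  have h5 : HasDerivAt (fun u => Real.arctan (k * ((e u) ^ 2) ^ (r / 2)))
      (1 / (1 + (k * ((e s) ^ 2) ^ (r / 2)) ^ 2) *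
        (k * (r / 2 * ((e s) ^ 2) ^ (r / 2 - 1) * ((2 : ℕ) * e s ^ 1 * D)))) s := h4
  -- now rewrite the derivative value
  have hes2 : (e s) ^ 2 = A ^ 2 := (sq_abs (e s)).symm
  have hP1 : (A ^ 2 : ℝ) ^ (r / 2) = A ^ r := by
    rw [← Real.rpow_natCast A 2, ← Real.rpow_mul hA.le]
    congr 1; push_cast; ring
  have hP2 : (A ^ 2 : ℝ) ^ (r / 2 - 1) = A ^ (r - 2) := by
    rw [← Real.rpow_natCast A 2, ← Real.rpow_mul hA.le]
    congr 1; push_cast; ring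
  have hsign : e s * Real.sign (e s) = A := by
    rw [hAdef]
    rcases lt_trichotomy (e s) 0 with h | h | h
    · rw [Real.sign_of_neg h, abs_of_neg h]; ring
    · exact absurd h hne
    · rw [Real.sign_of_pos h, abs_of_pos h]; ring
  have hED : e s * D = -(α₁ * (A ^ (1 + r) * A)) - β₁ * (A ^ (1 - r) * A) := by
    rw [hDdef]
    unfold spow
    rw [← hAdef]
    calc e s * (-α₁ * (A ^ (1 + r) * Real.sign (e s)) - β₁ * (A ^ (1 - r) * Real.sign (e s)))
        = (e s * Real.sign (e s)) * (-α₁ * A ^ (1 + r) - β₁ * A ^ (1 - r)) := by ring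
      _ = -(α₁ * (A ^ (1 + r) * A)) - β₁ * (A ^ (1 - r) * A) := by rw [hsign]; ring
  have h21 : A ^ (1 + r) * A = A ^ (2 + r) := by
    rw [show (2 : ℝ) + r = (1 + r) + 1 by ring, Real.rpow_add_one (ne_of_gt hA)]
  have h22 : A ^ (1 - r) * A = A ^ (2 - r) := by
    rw [show (2 : ℝ) - r = (1 - r) + 1 by ring, Real.rpow_add_one (ne_of_gt hA)]
  have h23 : A ^ (r - 2) * A ^ (2 + r) = A ^ r * A ^ r := by
    rw [← Real.rpow_add hA, ← Real.rpow_add hA]; ring_nf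
  have h24 : A ^ (r - 2) * A ^ (2 - r) = 1 := by
    rw [← Real.rpow_add hA, show r - 2 + (2 - r) = 0 by ring, Real.rpow_zero]
  have hsa := Real.sq_sqrt hα₁.le
  have hsb := Real.sq_sqrt hβ₁.le
  have hsbpos : 0 < Real.sqrt β₁ := Real.sqrt_pos.2 hβ₁
  have hS : S = Real.sqrt α₁ * Real.sqrt β₁ := Real.sqrt_mul hα₁.le β₁
  have hk1 : k * Real.sqrt β₁ = Real.sqrt α₁ := by
    rw [hkdef]; exact div_mul_cancel₀ _ hsbpos.ne'
  have hkS : k * β₁ = S := by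
    rw [hS]; linear_combination (-k) * hsb + Real.sqrt β₁ * hk1
  have hkα : k * α₁ = k ^ 2 * S := by
    rw [hS]; linear_combination (-k) * hsa - k * Real.sqrt α₁ * hk1
  have hden : (0 : ℝ) < 1 + (k * A ^ r) ^ 2 := by positivity
  have hBD : A ^ (r - 2) * (e s * D) = -(α₁ * (A ^ r * A ^ r)) - β₁ := by
    rw [hED, h21, h22]
    calc A ^ (r - 2) * (-(α₁ * A ^ (2 + r)) - β₁ * A ^ (2 - r))
        = -(α₁ * (A ^ (r - 2) * A ^ (2 + r))) - β₁ * (A ^ (r - 2) * A ^ (2 - r)) := by ring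
      _ = -(α₁ * (A ^ r * A ^ r)) - β₁ := by rw [h23, h24]; ring
  have hval : 1 / (1 + (k * ((e s) ^ 2) ^ (r / 2)) ^ 2) *
      (k * (r / 2 * ((e s) ^ 2) ^ (r / 2 - 1) * ((2 : ℕ) * e s ^ 1 * D))) = -(r * S) := by
    rw [hes2, hP1, hP2, pow_one]
    have hmain : k * (r / 2 * A ^ (r - 2) * ((2 : ℕ) * e s * D)) =
        -(r * S) * (1 + (k * A ^ r) ^ 2) := by
      calc k * (r / 2 * A ^ (r - 2) * ((2 : ℕ) * e s * D))
          = r * k * (A ^ (r - 2) * (e s * D)) := by push_cast; ring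
        _ = r * k * (-(α₁ * (A ^ r * A ^ r)) - β₁) := by rw [hBD]
        _ = -(r * S) * (1 + (k * A ^ r) ^ 2) := by
            linear_combination (-(r * (A ^ r) ^ 2)) * hkα - r * hkS
    rw [hmain]
    field_simp
  rw [hval] at h5
  exact h5

theorem fixed_time_convergence_signed_power_ode
    (α₁ β₁ : ℝ) (hα₁ : 0 < α₁) (hβ₁ : 0 < β₁)
    (p q : ℕ) (hp : 0 < p) (hq : 0 < q) (hqp : q < p)
    (t₀ : ℝ) (e : ℝ → ℝ)
    (hdiff : ∀ t, t₀ ≤ t → DifferentiableAt ℝ e t)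
    (he' : ∀ t, t₀ ≤ t → deriv e t =
      -α₁ * spow (e t) (1 + (q : ℝ) / p) - β₁ * spow (e t) (1 - (q : ℝ) / p)) :
    ∀ t, t ≥ t₀ + Real.pi * p / (2 * q * Real.sqrt (α₁ * β₁)) → e t = 0 := by
  intro t ht
  set r : ℝ := (q : ℝ) / p with hrdef
  set S : ℝ := Real.sqrt (α₁ * β₁) with hSdef
  set k : ℝ := Real.sqrt α₁ / Real.sqrt β₁ with hkdef
  have hSpos : 0 < S := Real.sqrt_pos.2 (mul_pos hα₁ hβ₁)
  have hq0 : ((q : ℝ)) ≠ 0 := Nat.cast_ne_zero.2 hq.ne'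
  have hp0 : ((p : ℝ)) ≠ 0 := Nat.cast_ne_zero.2 hp.ne'
  have hrpos : 0 < r := div_pos (by exact_mod_cast hq) (by exact_mod_cast hp)
  set c : ℝ := r * S with hcdef
  have hcpos : 0 < c := mul_pos hrpos hSpos
  set T : ℝ := Real.pi * p / (2 * q * S) with hTdef
  have hTpos : 0 < T := by
    apply div_pos (mul_pos Real.pi_pos (by exact_mod_cast hp))
    positivity
  have hcT : c * T = Real.pi / 2 := by
    rw [hcdef, hTdef, hrdef]
    field_simp
  have ht0t : t₀ ≤ t := by linarith
  by_contra hne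
  -- e² is antitone on [t₀, ∞)
  have hanti : AntitoneOn (fun s => e s ^ 2) (Set.Ici t₀) := by
    apply antitoneOn_of_deriv_nonpos (convex_Ici t₀)
    · exact fun s hs => ((hdiff s hs).continuousAt.pow 2).continuousWithinAt
    · intro s hs
      rw [interior_Ici] at hs
      exact ((hdiff s (le_of_lt hs)).pow 2).differentiableWithinAt
    · intro s hs
      rw [interior_Ici] at hs
      have hs' : t₀ ≤ s := le_of_lt hs
      rw [show deriv (fun s => e s ^ 2) s = _ from ((hdiff s hs').hasDerivAt.pow 2).deriv, he' s hs']
      have h1 := mul_spow_nonneg (e s) (1 + (q : ℝ) / p)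
      have h2 := mul_spow_nonneg (e s) (1 - (q : ℝ) / p)
      push_cast
      nlinarith [mul_nonneg hα₁.le h1, mul_nonneg hβ₁.le h2]
  have hnz : ∀ s ∈ Set.Icc t₀ t, e s ≠ 0 := by
    intro s hs h0
    have h2 : e t ^ 2 ≤ e s ^ 2 := hanti (Set.mem_Ici.2 hs.1) (Set.mem_Ici.2 ht0t) hs.2
    rw [h0] at h2
    have h3 : e t ^ 2 = 0 := le_antisymm (by simpa using h2) (sq_nonneg _)
    exact hne (pow_eq_zero_iff two_ne_zero |>.mp h3)
  -- the auxiliary function g + c·u is constant on [t₀, t]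
  set g : ℝ → ℝ := fun u => Real.arctan (k * ((e u) ^ 2) ^ (r / 2)) with hgdef
  have hg : ∀ s ∈ Set.Icc t₀ t, HasDerivAt (fun u => g u + c * u) 0 s := by
    intro s hs
    have hd : HasDerivAt e (-α₁ * spow (e s) (1 + r) - β₁ * spow (e s) (1 - r)) s := by
      have h := (hdiff s hs.1).hasDerivAt
      rwa [he' s hs.1] at h
    have h1 := hasDerivAt_aux α₁ β₁ hα₁ hβ₁ r e s hd (hnz s hs)
    have h2 : HasDerivAt (fun u : ℝ => c * u) c s := by
      simpa using (hasDerivAt_id s).const_mul c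
    have h3 := h1.add h2
    have : -(r * S) + c = 0 := by rw [hcdef]; ring
    rw [this] at h3
    exact h3
  have hconst := constant_of_has_deriv_right_zero
    (f := fun u => g u + c * u) (a := t₀) (b := t)
    (fun s hs => (hg s hs).continuousAt.continuousWithinAt)
    (fun s hs => ((hg s (Set.Ico_subset_Icc_self hs)).hasDerivWithinAt))
  have heq : g t + c * t = g t₀ + c * t₀ :=
    hconst t (Set.mem_Icc.2 ⟨ht0t, le_refl t⟩)
  have hgt : 0 < g t := by
    rw [hgdef]
    have hkpos : 0 < k := div_pos (Real.sqrt_pos.2 hα₁) (Real.sqrt_pos.2 hβ₁)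
    have hxpos : 0 < k * ((e t) ^ 2) ^ (r / 2) := by
      apply mul_pos hkpos
      apply Real.rpow_pos_of_pos
      positivity
    have := Real.arctan_strictMono hxpos
    rwa [Real.arctan_zero] at this
  have hgt0 : g t₀ < Real.pi / 2 := Real.arctan_lt_pi_div_two _
  have hge : c * T ≤ c * (t - t₀) := by
    apply mul_le_mul_of_nonneg_left _ hcpos.le
    linarith
  rw [hcT] at hge
  linarith
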